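/- Some RCGBARs admit no pure Nash equilibrium under private contention-averse preferences. Concretely, for distinct atomic resources A and B, the four-player RCGBAR with ε_1 = ∅, ε_2 = ∅, ε_3 = {B, B}, ε_4 = {A, A}, γ_1 = A·A·B·B, γ_2 = A·B, γ_3 = B, γ_4 = A satisfies NE^pca(G) = ∅. -/

import Mathlib

open scoped Classical

/-- A resource contribution game over atomic resource type `Res` with player set `ι`:
each player has a goal (a resource bundle, i.e. a multiset of atomic resources) and
an endowment (a resource bag, i.e. a multiset of resource bundles). -/
structure RCG (Res ι : Type*) where
  goal : ι → Multiset Res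
  endow : ι → Multiset (Multiset Res)

namespace RCG

variable {Res ι : Type*} [Fintype ι]

/-- A profile assigns to each player a bag (his contribution). -/
abbrev Profile (Res ι : Type*) := ι → Multiset (Multiset Res)

/-- Outcome of a profile: the multiset sum of all contributions. -/
def out (P : Profile Res ι) : Multiset (Multiset Res) := ∑ i, P i

/-- The bag `X` can be transformed into the bundle `B`: `♭(B) ⊆ ♭•(X)`. -/
def Trans (X : Multiset (Multiset Res)) (B : Multiset Res) : Prop := B ≤ X.sum

/-- Player `i` is potentially satisfied by profile `P`. -/
def Psat (G : RCG Res ι) (P : Profile Res ι) (i : ι) : Prop :=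
  Trans (out P) (G.goal i)

/-- The set of players potentially satisfied by `P`. -/
noncomputable def psatPlayers (G : RCG Res ι) (P : Profile Res ι) : Finset ι :=
  Finset.univ.filter fun i => Psat G P i

/-- The profile `P` is contentious. -/
def Contentious (G : RCG Res ι) (P : Profile Res ι) : Prop :=
  ¬ Trans (out P) (∑ j ∈ psatPlayers G P, G.goal j)

/-- Restriction of bundle `B` to the resource types occurring in `C`. -/
noncomputable def restr (B C : Multiset Res) : Multiset Res := B.filter (· ∈ C)

/-- The profile `P` is contentious for player `i`. -/
def ContentiousFor (G : RCG Res ι) (P : Profile Res ι) (i : ι) : Prop :=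
  Psat G P i ∧ ¬ Trans (out P) (∑ j ∈ psatPlayers G P, restr (G.goal j) (G.goal i))

/-- The three kinds of preferences: contention-tolerant, (public) contention-averse,
private contention-averse. -/
inductive Pref | ct | ca | pca

/-- `P` is a good profile for player `i` according to preference kind `pref`. -/
def Good (pref : Pref) (G : RCG Res ι) (P : Profile Res ι) (i : ι) : Prop :=
  match pref with
  | .ct => Psat G P i
  | .ca => Psat G P i ∧ ¬ Contentious G P
  | .pca => Psat G P i ∧ ¬ ContentiousFor G P i

/-- Player `i` strictly prefers `P` over `Q` (i.e. `Q ≺^pref_i P`). -/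
def Prefers (pref : Pref) (G : RCG Res ι) (i : ι) (Q P : Profile Res ι) : Prop :=
  (¬ Good pref G P i ∧ ¬ Good pref G Q i ∧ P i < Q i) ∨
  (Good pref G P i ∧ ¬ Good pref G Q i) ∨
  (Good pref G P i ∧ Good pref G Q i ∧ P i < Q i)

/-- `C` is a profitable deviation for player `i` from profile `P`. -/
noncomputable def ProfDev (pref : Pref) (G : RCG Res ι) (P : Profile Res ι) (i : ι)
    (C : Multiset (Multiset Res)) : Prop :=
  C ≤ G.endow i ∧ Prefers pref G i P (Function.update P i C)

/-- `P` is a pure Nash equilibrium of `G` according to `pref`: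
`P` is a profile of `G` and no player has a profitable deviation. -/
noncomputable def NE (pref : Pref) (G : RCG Res ι) (P : Profile Res ι) : Prop :=
  (∀ i, P i ≤ G.endow i) ∧ ∀ i C, ¬ ProfDev pref G P i C

/-- `G` is an RCG with endowments as bags of atomic resources. -/
def IsRCGBAR (G : RCG Res ι) : Prop :=
  ∀ i, ∀ B ∈ G.endow i, ∃ r : Res, B = {r}

/-- `G` has independent objectives. -/
def IndepObjectives (G : RCG Res ι) : Prop :=
  ∀ i j : ι, i ≠ j → ∀ r : Res, r ∈ G.goal i → r ∉ G.goal j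

end RCG


namespace RCGAux
variable {Res : Type*}

def msAB (A B : Res) (m n : ℕ) : Multiset Res :=
  Multiset.replicate m A + Multiset.replicate n B

lemma rep2 {α} (a : α) : Multiset.replicate 2 a = ({a, a} : Multiset α) := by
  rw [show (2:ℕ) = 1+1 from rfl, Multiset.replicate_add, Multiset.replicate_one]; rfl

lemma filter_rep {α} (p : α → Prop) [DecidablePred p] (n : ℕ) (a : α) :
    Multiset.filter p (Multiset.replicate n a)
      = if p a then Multiset.replicate n a else 0 := by
  induction n with
  | zero => simp
  | succ n ih =>
    rw [Multiset.replicate_succ]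
    by_cases h : p a <;>
      simp [Multiset.filter_cons, h, ih, Multiset.replicate_succ]

variable {A B : Res} (hAB : A ≠ B)

include hAB

lemma count_msA (m n : ℕ) : Multiset.count A (msAB A B m n) = m := by
  simp [msAB, Multiset.count_replicate, Ne.symm hAB]

lemma count_msB (m n : ℕ) : Multiset.count B (msAB A B m n) = n := by
  simp [msAB, Multiset.count_replicate, hAB]

lemma msAB_le {m n a b : ℕ} : msAB A B m n ≤ msAB A B a b ↔ m ≤ a ∧ n ≤ b := by
  constructor
  · intro h
    rw [Multiset.le_iff_count] at h
    have h1 := h A; have h2 := h B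
    rw [count_msA hAB, count_msA hAB] at h1
    rw [count_msB hAB, count_msB hAB] at h2
    exact ⟨h1, h2⟩
  · rintro ⟨h1, h2⟩
    rw [Multiset.le_iff_count]
    intro x
    by_cases hx : A = x <;> by_cases hx' : B = x
    · exact absurd (hx.trans hx'.symm) hAB
    · simp [msAB, Multiset.count_replicate, hx, hx', h1]
    · simp [msAB, Multiset.count_replicate, hx, hx', h2]
    · simp [msAB, Multiset.count_replicate, hx, hx']

lemma memA_msAB {p q : ℕ} : A ∈ msAB A B p q ↔ p ≠ 0 := by
  simp [msAB, Multiset.mem_replicate, hAB]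

lemma memB_msAB {p q : ℕ} : B ∈ msAB A B p q ↔ q ≠ 0 := by
  simp [msAB, Multiset.mem_replicate, Ne.symm hAB]

lemma restr_msAB (m n p q : ℕ) :
    RCG.restr (msAB A B m n) (msAB A B p q)
      = msAB A B (if p = 0 then 0 else m) (if q = 0 then 0 else n) := by
  unfold RCG.restr
  rw [show msAB A B m n = Multiset.replicate m A + Multiset.replicate n B from rfl,
    Multiset.filter_add, filter_rep, filter_rep]
  simp only [memA_msAB hAB, memB_msAB hAB]
  by_cases hp : p = 0 <;> by_cases hq : q = 0 <;>
    simp [msAB, hp, hq]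

omit hAB in
lemma msAB_add (m n m' n' : ℕ) :
    msAB A B m n + msAB A B m' n' = msAB A B (m + m') (n + n') := by
  simp only [msAB, Multiset.replicate_add]
  abel

omit hAB in
lemma e22 : ({A, A, B, B} : Multiset Res) = msAB A B 2 2 := by
  rw [msAB, rep2, rep2]; rfl

omit hAB in
lemma e11 : ({A, B} : Multiset Res) = msAB A B 1 1 := by
  rw [msAB, Multiset.replicate_one, Multiset.replicate_one]; rfl

omit hAB in
lemma e01 : ({B} : Multiset Res) = msAB A B 0 1 := by
  simp [msAB, Multiset.replicate_one]

omit hAB in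
lemma e10 : ({A} : Multiset Res) = msAB A B 1 0 := by
  simp [msAB, Multiset.replicate_one]

omit hAB in
lemma e00 : (0 : Multiset Res) = msAB A B 0 0 := by
  simp [msAB]

omit hAB

lemma rep_lt_rep {α} (a : α) {k n : ℕ} (h : k < n) :
    Multiset.replicate k a < Multiset.replicate n a := by
  refine lt_of_le_of_ne ((Multiset.replicate_le_replicate a).mpr h.le) ?_
  intro he
  have := congrArg Multiset.card he
  simp [Multiset.card_replicate] at this
  omega

lemma le_pair {α} {m : Multiset α} {a : α} (h : m ≤ ({a, a} : Multiset α)) :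
    m = Multiset.replicate 0 a ∨ m = Multiset.replicate 1 a ∨ m = Multiset.replicate 2 a := by
  have hm : m = Multiset.replicate (Multiset.card m) a :=
    Multiset.eq_replicate_card.mpr (fun b hb => by
      have := Multiset.mem_of_le h hb
      simpa using this)
  have hc : Multiset.card m ≤ 2 := by
    have := Multiset.card_le_card h
    simpa using this
  obtain h0 | h1 | h2 : Multiset.card m = 0 ∨ Multiset.card m = 1 ∨ Multiset.card m = 2 := by omega
  · left; rw [hm, h0]
  · right; left; rw [hm, h1]
  · right; right; rw [hm, h2]

end RCGAux

namespace RCGAux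
variable {Res : Type*} {A B : Res} (hAB : A ≠ B)

/-- The canonical profile in which player 2 contributes `b` copies of `{B}`
and player 3 contributes `a` copies of `{A}`. -/
def QP (A B : Res) (a b : ℕ) : RCG.Profile Res (Fin 4) :=
  ![0, 0, Multiset.replicate b ({B} : Multiset Res),
        Multiset.replicate a ({A} : Multiset Res)]

lemma QP2 (a b : ℕ) : QP A B a b 2 = Multiset.replicate b ({B} : Multiset Res) := rfl
lemma QP3 (a b : ℕ) : QP A B a b 3 = Multiset.replicate a ({A} : Multiset Res) := rfl

lemma out_sum (a b : ℕ) : (RCG.out (QP A B a b)).sum = msAB A B a b := by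
  have h : RCG.out (QP A B a b)
      = Multiset.replicate b ({B} : Multiset Res) + Multiset.replicate a ({A} : Multiset Res) := by
    unfold RCG.out
    rw [Fin.sum_univ_four]
    simp [QP]
  rw [h, Multiset.sum_add, Multiset.sum_replicate, Multiset.sum_replicate,
    Multiset.nsmul_singleton, Multiset.nsmul_singleton, msAB, add_comm]

lemma update2 (a b b' : ℕ) :
    Function.update (QP A B a b) 2 (Multiset.replicate b' ({B} : Multiset Res)) = QP A B a b' := by
  funext j; fin_cases j <;> simp [QP, Function.update]

lemma update3 (a b a' : ℕ) :
    Function.update (QP A B a b) 3 (Multiset.replicate a' ({A} : Multiset Res)) = QP A B a' b := by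
  funext j; fin_cases j <;> simp [QP, Function.update]

lemma prefers_of_eq {ι : Type*} [Fintype ι] {pref : RCG.Pref} {G : RCG Res ι} {i : ι}
    {P Q Q' : RCG.Profile Res ι} (h : Q = Q') (hp : RCG.Prefers pref G i P Q') :
    RCG.Prefers pref G i P Q := h ▸ hp

lemma good_pca_iff {ι : Type*} [Fintype ι] (G : RCG Res ι) (P : RCG.Profile Res ι) (i : ι) :
    RCG.Good .pca G P i ↔ RCG.Psat G P i ∧
      (∑ j ∈ RCG.psatPlayers G P, RCG.restr (G.goal j) (G.goal i)) ≤ (RCG.out P).sum := by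
  unfold RCG.Good RCG.ContentiousFor RCG.Trans
  tauto

section WithG
variable {G : RCG Res (Fin 4)}
variable (hgoal : G.goal = ![({A, A, B, B} : Multiset Res), ({A, B} : Multiset Res),
                        ({B} : Multiset Res), ({A} : Multiset Res)])
include hgoal

lemma goal0 : G.goal 0 = msAB A B 2 2 := by rw [hgoal]; simpa using e22
lemma goal1 : G.goal 1 = msAB A B 1 1 := by rw [hgoal]; simpa using e11
lemma goal2 : G.goal 2 = msAB A B 0 1 := by rw [hgoal]; simpa using e01
lemma goal3 : G.goal 3 = msAB A B 1 0 := by rw [hgoal]; simpa using e10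

include hAB

lemma psat0_iff (a b : ℕ) : RCG.Psat G (QP A B a b) 0 ↔ 2 ≤ a ∧ 2 ≤ b := by
  unfold RCG.Psat RCG.Trans
  rw [out_sum, goal0 hgoal, msAB_le hAB]

lemma psat1_iff (a b : ℕ) : RCG.Psat G (QP A B a b) 1 ↔ 1 ≤ a ∧ 1 ≤ b := by
  unfold RCG.Psat RCG.Trans
  rw [out_sum, goal1 hgoal, msAB_le hAB]

lemma psat2_iff (a b : ℕ) : RCG.Psat G (QP A B a b) 2 ↔ 1 ≤ b := by
  unfold RCG.Psat RCG.Trans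
  rw [out_sum, goal2 hgoal, msAB_le hAB]
  omega

lemma psat3_iff (a b : ℕ) : RCG.Psat G (QP A B a b) 3 ↔ 1 ≤ a := by
  unfold RCG.Psat RCG.Trans
  rw [out_sum, goal3 hgoal, msAB_le hAB]
  omega


lemma sum_psat (a b : ℕ) (f : Fin 4 → Multiset Res) :
    (∑ j ∈ RCG.psatPlayers G (QP A B a b), f j)
      = (if 2 ≤ a ∧ 2 ≤ b then f 0 else 0) + (if 1 ≤ a ∧ 1 ≤ b then f 1 else 0)
        + (if 1 ≤ b then f 2 else 0) + (if 1 ≤ a then f 3 else 0) := by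
  unfold RCG.psatPlayers
  rw [Finset.sum_filter, Fin.sum_univ_four]
  simp only [psat0_iff hAB hgoal, psat1_iff hAB hgoal, psat2_iff hAB hgoal,
    psat3_iff hAB hgoal]

lemma g10_3 : RCG.Good .pca G (QP A B 1 0) 3 := by
  rw [good_pca_iff]
  constructor
  · exact (psat3_iff hAB hgoal _ _).mpr (by norm_num)
  · rw [sum_psat hAB hgoal, out_sum,
      goal0 hgoal, goal1 hgoal, goal2 hgoal, goal3 hgoal]
    simp only [restr_msAB hAB]
    norm_num [msAB_add, msAB_le hAB]

lemma g20_3 : RCG.Good .pca G (QP A B 2 0) 3 := by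
  rw [good_pca_iff]
  constructor
  · exact (psat3_iff hAB hgoal _ _).mpr (by norm_num)
  · rw [sum_psat hAB hgoal, out_sum,
      goal0 hgoal, goal1 hgoal, goal2 hgoal, goal3 hgoal]
    simp only [restr_msAB hAB]
    norm_num [msAB_add, msAB_le hAB]

lemma g01_2 : RCG.Good .pca G (QP A B 0 1) 2 := by
  rw [good_pca_iff]
  constructor
  · exact (psat2_iff hAB hgoal _ _).mpr (by norm_num)
  · rw [sum_psat hAB hgoal, out_sum,
      goal0 hgoal, goal1 hgoal, goal2 hgoal, goal3 hgoal]
    simp only [restr_msAB hAB]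
    norm_num [msAB_add, msAB_le hAB]

lemma g02_2 : RCG.Good .pca G (QP A B 0 2) 2 := by
  rw [good_pca_iff]
  constructor
  · exact (psat2_iff hAB hgoal _ _).mpr (by norm_num)
  · rw [sum_psat hAB hgoal, out_sum,
      goal0 hgoal, goal1 hgoal, goal2 hgoal, goal3 hgoal]
    simp only [restr_msAB hAB]
    norm_num [msAB_add, msAB_le hAB]

lemma g12_2 : RCG.Good .pca G (QP A B 1 2) 2 := by
  rw [good_pca_iff]
  constructor
  · exact (psat2_iff hAB hgoal _ _).mpr (by norm_num)
  · rw [sum_psat hAB hgoal, out_sum,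
      goal0 hgoal, goal1 hgoal, goal2 hgoal, goal3 hgoal]
    simp only [restr_msAB hAB]
    norm_num [msAB_add, msAB_le hAB]

lemma g21_3 : RCG.Good .pca G (QP A B 2 1) 3 := by
  rw [good_pca_iff]
  constructor
  · exact (psat3_iff hAB hgoal _ _).mpr (by norm_num)
  · rw [sum_psat hAB hgoal, out_sum,
      goal0 hgoal, goal1 hgoal, goal2 hgoal, goal3 hgoal]
    simp only [restr_msAB hAB]
    norm_num [msAB_add, msAB_le hAB]

lemma n00_3 : ¬ RCG.Good .pca G (QP A B 0 0) 3 := by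
  rw [good_pca_iff]
  rintro ⟨hp, -⟩
  rw [psat3_iff hAB hgoal] at hp
  omega

lemma n10_2 : ¬ RCG.Good .pca G (QP A B 1 0) 2 := by
  rw [good_pca_iff]
  rintro ⟨hp, -⟩
  rw [psat2_iff hAB hgoal] at hp
  omega

lemma n01_3 : ¬ RCG.Good .pca G (QP A B 0 1) 3 := by
  rw [good_pca_iff]
  rintro ⟨hp, -⟩
  rw [psat3_iff hAB hgoal] at hp
  omega

lemma n20_2 : ¬ RCG.Good .pca G (QP A B 2 0) 2 := by
  rw [good_pca_iff]
  rintro ⟨hp, -⟩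
  rw [psat2_iff hAB hgoal] at hp
  omega

lemma n02_3 : ¬ RCG.Good .pca G (QP A B 0 2) 3 := by
  rw [good_pca_iff]
  rintro ⟨hp, -⟩
  rw [psat3_iff hAB hgoal] at hp
  omega

lemma n11_2 : ¬ RCG.Good .pca G (QP A B 1 1) 2 := by
  rw [good_pca_iff]
  rintro ⟨-, hT⟩
  rw [sum_psat hAB hgoal, out_sum,
    goal0 hgoal, goal1 hgoal, goal2 hgoal, goal3 hgoal] at hT
  simp only [restr_msAB hAB] at hT
  norm_num [msAB_add, msAB_le hAB] at hT

lemma n21_2 : ¬ RCG.Good .pca G (QP A B 2 1) 2 := by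
  rw [good_pca_iff]
  rintro ⟨-, hT⟩
  rw [sum_psat hAB hgoal, out_sum,
    goal0 hgoal, goal1 hgoal, goal2 hgoal, goal3 hgoal] at hT
  simp only [restr_msAB hAB] at hT
  norm_num [msAB_add, msAB_le hAB] at hT

lemma n12_3 : ¬ RCG.Good .pca G (QP A B 1 2) 3 := by
  rw [good_pca_iff]
  rintro ⟨-, hT⟩
  rw [sum_psat hAB hgoal, out_sum,
    goal0 hgoal, goal1 hgoal, goal2 hgoal, goal3 hgoal] at hT
  simp only [restr_msAB hAB] at hT
  norm_num [msAB_add, msAB_le hAB] at hT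

lemma n22_2 : ¬ RCG.Good .pca G (QP A B 2 2) 2 := by
  rw [good_pca_iff]
  rintro ⟨-, hT⟩
  rw [sum_psat hAB hgoal, out_sum,
    goal0 hgoal, goal1 hgoal, goal2 hgoal, goal3 hgoal] at hT
  simp only [restr_msAB hAB] at hT
  norm_num [msAB_add, msAB_le hAB] at hT

end WithG
end RCGAux


/-- the four-player RCGBAR with `ε₁ = ε₂ = ∅`, `ε₃ = {B,B}`,
`ε₄ = {A,A}`, `γ₁ = A·A·B·B`, `γ₂ = A·B`, `γ₃ = B`, `γ₄ = A` has no pure Nash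
equilibrium under private contention-averse preferences. -/
theorem RCGBAR_no_NE_pca {Res : Type*} (A B : Res) (hAB : A ≠ B)
    (G : RCG Res (Fin 4))
    (hgoal : G.goal = ![({A, A, B, B} : Multiset Res), ({A, B} : Multiset Res),
                        ({B} : Multiset Res), ({A} : Multiset Res)])
    (hendow : G.endow = ![(0 : Multiset (Multiset Res)),
                          (0 : Multiset (Multiset Res)),
                          ({({B} : Multiset Res), ({B} : Multiset Res)} :
                            Multiset (Multiset Res)),
                          ({({A} : Multiset Res), ({A} : Multiset Res)} :
                            Multiset (Multiset Res))]) :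
    ∀ P : RCG.Profile Res (Fin 4), ¬ RCG.NE .pca G P := by
  intro P hNE
  obtain ⟨hfeas, hdev⟩ := hNE
  have h0 : P 0 = 0 := by
    have h := hfeas 0; rw [hendow] at h; simpa using h
  have h1 : P 1 = 0 := by
    have h := hfeas 1; rw [hendow] at h; simpa using h
  have h2 : P 2 ≤ ({({B} : Multiset Res), ({B} : Multiset Res)} : Multiset (Multiset Res)) := by
    have h := hfeas 2; rw [hendow] at h; simpa using h
  have h3 : P 3 ≤ ({({A} : Multiset Res), ({A} : Multiset Res)} : Multiset (Multiset Res)) := by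
    have h := hfeas 3; rw [hendow] at h; simpa using h
  have he2 : G.endow 2 = Multiset.replicate 2 ({B} : Multiset Res) := by
    rw [hendow]; simp [RCGAux.rep2]
  have he3 : G.endow 3 = Multiset.replicate 2 ({A} : Multiset Res) := by
    rw [hendow]; simp [RCGAux.rep2]
  obtain hb | hb | hb := RCGAux.le_pair h2 <;>
    obtain ha | ha | ha := RCGAux.le_pair h3
  · -- a = 0, b = 0
    have hPQ : P = RCGAux.QP A B 0 0 := by
      funext j; fin_cases j <;> simp [RCGAux.QP, h0, h1, hb, ha]
    refine hdev 3 (Multiset.replicate 1 ({A} : Multiset Res)) ⟨?_, ?_⟩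
    · exact le_trans ((Multiset.replicate_le_replicate _).mpr (by norm_num)) (le_of_eq he3.symm)
    · rw [hPQ]
      refine RCGAux.prefers_of_eq (Q' := RCGAux.QP A B 1 0) ?_ ?_
      · funext j; fin_cases j <;> simp [Function.update, RCGAux.QP]
      · exact Or.inr (Or.inl ⟨RCGAux.g10_3 hAB hgoal, RCGAux.n00_3 hAB hgoal⟩)
  · -- a = 1, b = 0
    have hPQ : P = RCGAux.QP A B 1 0 := by
      funext j; fin_cases j <;> simp [RCGAux.QP, h0, h1, hb, ha]
    refine hdev 2 (Multiset.replicate 2 ({B} : Multiset Res)) ⟨?_, ?_⟩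
    · exact le_trans ((Multiset.replicate_le_replicate _).mpr (by norm_num)) (le_of_eq he2.symm)
    · rw [hPQ]
      refine RCGAux.prefers_of_eq (Q' := RCGAux.QP A B 1 2) ?_ ?_
      · funext j; fin_cases j <;> simp [Function.update, RCGAux.QP]
      · exact Or.inr (Or.inl ⟨RCGAux.g12_2 hAB hgoal, RCGAux.n10_2 hAB hgoal⟩)
  · -- a = 2, b = 0
    have hPQ : P = RCGAux.QP A B 2 0 := by
      funext j; fin_cases j <;> simp [RCGAux.QP, h0, h1, hb, ha]
    refine hdev 3 (Multiset.replicate 1 ({A} : Multiset Res)) ⟨?_, ?_⟩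
    · exact le_trans ((Multiset.replicate_le_replicate _).mpr (by norm_num)) (le_of_eq he3.symm)
    · rw [hPQ]
      refine RCGAux.prefers_of_eq (Q' := RCGAux.QP A B 1 0) ?_ ?_
      · funext j; fin_cases j <;> simp [Function.update, RCGAux.QP]
      · refine Or.inr (Or.inr ⟨RCGAux.g10_3 hAB hgoal, RCGAux.g20_3 hAB hgoal, ?_⟩)
        exact RCGAux.rep_lt_rep _ (by norm_num)
  · -- a = 0, b = 1
    have hPQ : P = RCGAux.QP A B 0 1 := by
      funext j; fin_cases j <;> simp [RCGAux.QP, h0, h1, hb, ha]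
    refine hdev 3 (Multiset.replicate 2 ({A} : Multiset Res)) ⟨?_, ?_⟩
    · exact le_trans ((Multiset.replicate_le_replicate _).mpr (by norm_num)) (le_of_eq he3.symm)
    · rw [hPQ]
      refine RCGAux.prefers_of_eq (Q' := RCGAux.QP A B 2 1) ?_ ?_
      · funext j; fin_cases j <;> simp [Function.update, RCGAux.QP]
      · exact Or.inr (Or.inl ⟨RCGAux.g21_3 hAB hgoal, RCGAux.n01_3 hAB hgoal⟩)
  · -- a = 1, b = 1
    have hPQ : P = RCGAux.QP A B 1 1 := by
      funext j; fin_cases j <;> simp [RCGAux.QP, h0, h1, hb, ha]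
    refine hdev 2 (Multiset.replicate 0 ({B} : Multiset Res)) ⟨?_, ?_⟩
    · exact le_trans ((Multiset.replicate_le_replicate _).mpr (by norm_num)) (le_of_eq he2.symm)
    · rw [hPQ]
      refine RCGAux.prefers_of_eq (Q' := RCGAux.QP A B 1 0) ?_ ?_
      · funext j; fin_cases j <;> simp [Function.update, RCGAux.QP]
      · refine Or.inl ⟨RCGAux.n10_2 hAB hgoal, RCGAux.n11_2 hAB hgoal, ?_⟩
        exact RCGAux.rep_lt_rep _ (by norm_num)
  · -- a = 2, b = 1
    have hPQ : P = RCGAux.QP A B 2 1 := by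
      funext j; fin_cases j <;> simp [RCGAux.QP, h0, h1, hb, ha]
    refine hdev 2 (Multiset.replicate 0 ({B} : Multiset Res)) ⟨?_, ?_⟩
    · exact le_trans ((Multiset.replicate_le_replicate _).mpr (by norm_num)) (le_of_eq he2.symm)
    · rw [hPQ]
      refine RCGAux.prefers_of_eq (Q' := RCGAux.QP A B 2 0) ?_ ?_
      · funext j; fin_cases j <;> simp [Function.update, RCGAux.QP]
      · refine Or.inl ⟨RCGAux.n20_2 hAB hgoal, RCGAux.n21_2 hAB hgoal, ?_⟩
        exact RCGAux.rep_lt_rep _ (by norm_num)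
  · -- a = 0, b = 2
    have hPQ : P = RCGAux.QP A B 0 2 := by
      funext j; fin_cases j <;> simp [RCGAux.QP, h0, h1, hb, ha]
    refine hdev 2 (Multiset.replicate 1 ({B} : Multiset Res)) ⟨?_, ?_⟩
    · exact le_trans ((Multiset.replicate_le_replicate _).mpr (by norm_num)) (le_of_eq he2.symm)
    · rw [hPQ]
      refine RCGAux.prefers_of_eq (Q' := RCGAux.QP A B 0 1) ?_ ?_
      · funext j; fin_cases j <;> simp [Function.update, RCGAux.QP]
      · refine Or.inr (Or.inr ⟨RCGAux.g01_2 hAB hgoal, RCGAux.g02_2 hAB hgoal, ?_⟩)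
        exact RCGAux.rep_lt_rep _ (by norm_num)
  · -- a = 1, b = 2
    have hPQ : P = RCGAux.QP A B 1 2 := by
      funext j; fin_cases j <;> simp [RCGAux.QP, h0, h1, hb, ha]
    refine hdev 3 (Multiset.replicate 0 ({A} : Multiset Res)) ⟨?_, ?_⟩
    · exact le_trans ((Multiset.replicate_le_replicate _).mpr (by norm_num)) (le_of_eq he3.symm)
    · rw [hPQ]
      refine RCGAux.prefers_of_eq (Q' := RCGAux.QP A B 0 2) ?_ ?_
      · funext j; fin_cases j <;> simp [Function.update, RCGAux.QP]
      · refine Or.inl ⟨RCGAux.n02_3 hAB hgoal, RCGAux.n12_3 hAB hgoal, ?_⟩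
        exact RCGAux.rep_lt_rep _ (by norm_num)
  · -- a = 2, b = 2
    have hPQ : P = RCGAux.QP A B 2 2 := by
      funext j; fin_cases j <;> simp [RCGAux.QP, h0, h1, hb, ha]
    refine hdev 2 (Multiset.replicate 0 ({B} : Multiset Res)) ⟨?_, ?_⟩
    · exact le_trans ((Multiset.replicate_le_replicate _).mpr (by norm_num)) (le_of_eq he2.symm)
    · rw [hPQ]
      refine RCGAux.prefers_of_eq (Q' := RCGAux.QP A B 2 0) ?_ ?_
      · funext j; fin_cases j <;> simp [Function.update, RCGAux.QP]
      · refine Or.inl ⟨RCGAux.n20_2 hAB hgoal, RCGAux.n22_2 hAB hgoal, ?_⟩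
        exact RCGAux.rep_lt_rep _ (by norm_num)
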